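/- For every k ≥ 1 there is a constant C = C(k) > 0 with the following property (Euclidean case of the Velázquez-type weighted smoothing inequality). For every τ > 0, all radii r ≥ 0 and r̃ ≥ 0, and every nonnegative measurable ψ : ℝ^k → ℝ with N_{r̃}(ψ) < ∞, the function (S(τ)ψ)(y) = ∫_{ℝ^k} K_τ(y,z)·ψ(z) dz is finite for all y, and N_r(S(τ)ψ) ≤ C · e^τ · (4π(1 − e^{−τ}))^{−k/2} · exp( e^{−τ}·((r − r̃·e^{τ/2})₊)² / (4(1 − e^{−τ})) ) · N_{r̃}(ψ), where (a)₊ = max(a, 0). -/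

import Mathlib

open Real MeasureTheory ENNReal

/-- The Mehler-type kernel on `ℝ^k`:
`K_τ(y,z) = e^τ (4π(1 − e^{−τ}))^{−k/2} exp(−|y e^{−τ/2} − z|²/(4(1 − e^{−τ})))`. -/
noncomputable def mehlerK (k : ℕ) (τ : ℝ) (y z : EuclideanSpace ℝ (Fin k)) : ℝ :=
  Real.exp τ * (4 * π * (1 - Real.exp (-τ))) ^ (-(k : ℝ) / 2) *
    Real.exp (-‖Real.exp (-τ / 2) • y - z‖ ^ 2 / (4 * (1 - Real.exp (-τ))))

/-- The local Gaussian norm `N_r(ψ) = sup_{|ξ| ≤ r} (∫ ψ(y)² e^{−|y−ξ|²/4} dy)^{1/2}`,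
valued in `ℝ≥0∞`. -/
noncomputable def gaussN (k : ℕ) (r : ℝ) (ψ : EuclideanSpace ℝ (Fin k) → ℝ) : ℝ≥0∞ :=
  ⨆ ξ ∈ {ξ : EuclideanSpace ℝ (Fin k) | ‖ξ‖ ≤ r},
    (∫⁻ y, ENNReal.ofReal ((ψ y) ^ 2 * Real.exp (-‖y - ξ‖ ^ 2 / 4))) ^ (1 / 2 : ℝ)

lemma quad_ident {E : Type*} [NormedAddCommGroup E] [InnerProductSpace ℝ E]
    (α β : ℝ) (hαβ : β < α) (w v z : E) :
    -α * ‖z - w‖ ^ 2 + β * ‖z - v‖ ^ 2 =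
      -(α - β) * ‖z - ((α / (α - β)) • w - (β / (α - β)) • v)‖ ^ 2
        + (α * β / (α - β)) * ‖w - v‖ ^ 2 := by
  have hγ : α - β ≠ 0 := sub_ne_zero.mpr hαβ.ne'
  have e : ∀ a b : E, ‖a - b‖ ^ 2 = ‖a‖ ^ 2 - 2 * inner ℝ a b + ‖b‖ ^ 2 :=
    fun a b => norm_sub_sq_real a b
  rw [e z w, e z v, e z _, e w v, e ((α / (α - β)) • w) ((β / (α - β)) • v)]
  simp only [inner_sub_right, real_inner_smul_right, real_inner_smul_left, norm_smul,
    Real.norm_eq_abs, mul_pow, sq_abs]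
  rw [real_inner_comm v w]
  field_simp
  ring

lemma integrable_gauss {k : ℕ} (b : ℝ) (hb : 0 < b) :
    Integrable (fun v : EuclideanSpace ℝ (Fin k) => rexp (-b * ‖v‖ ^ 2)) := by
  have h := GaussianFourier.integrable_cexp_neg_mul_sq_norm_add (V := EuclideanSpace ℝ (Fin k))
    (b := (b : ℂ)) (by simpa using hb) 0 0
  have h2 := h.re
  refine h2.congr (Filter.Eventually.of_forall fun v => ?_)
  simp [Complex.exp_ofReal_re]
  rw [show -(↑b * (‖v‖:ℂ) ^ 2) = ((-(b * ‖v‖ ^ 2) : ℝ) : ℂ) by push_cast; ring,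
    ← Complex.ofReal_exp, Complex.ofReal_re]

lemma lintegral_gauss {k : ℕ} (b : ℝ) (hb : 0 < b) (c : EuclideanSpace ℝ (Fin k)) :
    ∫⁻ z : EuclideanSpace ℝ (Fin k), ENNReal.ofReal (rexp (-b * ‖z - c‖ ^ 2)) =
      ENNReal.ofReal ((π / b) ^ ((k : ℝ) / 2)) := by
  have := lintegral_sub_right_eq_self (μ := volume)
    (fun x : EuclideanSpace ℝ (Fin k) => ENNReal.ofReal (rexp (-b * ‖x‖ ^ 2))) c
  rw [this]
  rw [← ofReal_integral_eq_lintegral_ofReal (integrable_gauss b hb)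
    (Filter.Eventually.of_forall fun v => (exp_pos _).le)]
  rw [GaussianFourier.integral_rexp_neg_mul_sq_norm hb]
  congr 1
  simp [finrank_euclideanSpace_fin]

lemma lintegral_gauss_bound {k : ℕ} (α β : ℝ) (hβα : β < α) (w v : EuclideanSpace ℝ (Fin k)) :
    ∫⁻ z : EuclideanSpace ℝ (Fin k), ENNReal.ofReal (rexp (-α * ‖z - w‖ ^ 2 + β * ‖z - v‖ ^ 2)) =
      ENNReal.ofReal ((π / (α - β)) ^ ((k : ℝ) / 2) * rexp (α * β / (α - β) * ‖w - v‖ ^ 2)) := by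
  have hγ : 0 < α - β := sub_pos.mpr hβα
  calc ∫⁻ z : EuclideanSpace ℝ (Fin k),
        ENNReal.ofReal (rexp (-α * ‖z - w‖ ^ 2 + β * ‖z - v‖ ^ 2))
      = ∫⁻ z : EuclideanSpace ℝ (Fin k), ENNReal.ofReal (rexp (α * β / (α - β) * ‖w - v‖ ^ 2)) *
          ENNReal.ofReal (rexp (-(α - β) *
            ‖z - ((α / (α - β)) • w - (β / (α - β)) • v)‖ ^ 2)) := by
        congr 1 with z
        rw [← ENNReal.ofReal_mul (exp_pos _).le, ← Real.exp_add, quad_ident α β hβα w v z]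
        ring_nf
    _ = ENNReal.ofReal (rexp (α * β / (α - β) * ‖w - v‖ ^ 2)) *
          ENNReal.ofReal ((π / (α - β)) ^ ((k : ℝ) / 2)) := by
        rw [lintegral_const_mul' _ _ ENNReal.ofReal_ne_top, lintegral_gauss _ hγ]
    _ = _ := by rw [← ENNReal.ofReal_mul (exp_pos _).le]; ring_nf

lemma ofReal_exp_rpow (x p : ℝ) (hp : 0 ≤ p) :
    ENNReal.ofReal (rexp x) ^ p = ENNReal.ofReal (rexp (p * x)) := by
  rw [ENNReal.ofReal_rpow_of_nonneg (exp_pos _).le hp, mul_comm, Real.exp_mul]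

example (s : ℝ) (hs0 : 0 < s) (hs1 : s < 1) : (1:ℝ)/4 < 1/(2*s) := by
  rw [div_lt_div_iff₀ (by norm_num) (by linarith)]; linarith

lemma cs_bound {k : ℕ} (s : ℝ) (hs0 : 0 < s) (hs1 : s < 1)
    (ψ : EuclideanSpace ℝ (Fin k) → ℝ) (hψm : Measurable ψ) (hψ0 : ∀ z, 0 ≤ ψ z)
    (m : ℝ) (hm : 0 ≤ m) (ξ' w : EuclideanSpace ℝ (Fin k))
    (hψle : (∫⁻ z, ENNReal.ofReal (ψ z ^ 2 * rexp (-‖z - ξ'‖ ^ 2 / 4))) ≤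
      ENNReal.ofReal (m ^ 2)) :
    ∫⁻ z, ENNReal.ofReal (rexp (-‖w - z‖ ^ 2 / (4 * s)) * ψ z) ≤
      ENNReal.ofReal ((4 * π * s / (2 - s)) ^ ((k : ℝ) / 4) *
        rexp (‖w - ξ'‖ ^ 2 / (4 * (2 - s))) * m) := by
  have h2s : 0 < 2 - s := by linarith
  set F : EuclideanSpace ℝ (Fin k) → ℝ≥0∞ :=
    fun z => ENNReal.ofReal (rexp (-(1 / (4 * s)) * ‖z - w‖ ^ 2 + (1 / 8) * ‖z - ξ'‖ ^ 2))
    with hF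
  set G : EuclideanSpace ℝ (Fin k) → ℝ≥0∞ :=
    fun z => ENNReal.ofReal (ψ z * rexp (-(1 / 8) * ‖z - ξ'‖ ^ 2)) with hG
  have hFm : AEMeasurable F := by
    apply Measurable.aemeasurable
    apply Measurable.ennreal_ofReal
    fun_prop
  have hGm : AEMeasurable G := by
    apply Measurable.aemeasurable
    apply Measurable.ennreal_ofReal
    exact hψm.mul (by fun_prop)
  have hdecomp : ∀ z, ENNReal.ofReal (rexp (-‖w - z‖ ^ 2 / (4 * s)) * ψ z) = F z * G z := by
    intro z
    rw [hF, hG, ← ENNReal.ofReal_mul (exp_pos _).le]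
    congr 1
    rw [show rexp (-(1 / (4 * s)) * ‖z - w‖ ^ 2 + 1 / 8 * ‖z - ξ'‖ ^ 2) *
        (ψ z * rexp (-(1 / 8) * ‖z - ξ'‖ ^ 2)) =
        (rexp (-(1 / (4 * s)) * ‖z - w‖ ^ 2 + 1 / 8 * ‖z - ξ'‖ ^ 2) *
          rexp (-(1 / 8) * ‖z - ξ'‖ ^ 2)) * ψ z by ring, ← Real.exp_add]
    rw [norm_sub_rev z w]
    congr 2
    ring
  have hFint : ∫⁻ z, F z ^ (2:ℝ) ≤
      ENNReal.ofReal ((4 * π * s / (2 - s)) ^ ((k : ℝ) / 2) *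
        rexp (‖w - ξ'‖ ^ 2 / (2 * (2 - s)))) := by
    have heq : ∀ z : EuclideanSpace ℝ (Fin k), F z ^ (2:ℝ) =
        ENNReal.ofReal (rexp (-(1 / (2 * s)) * ‖z - w‖ ^ 2 + (1 / 4) * ‖z - ξ'‖ ^ 2)) := by
      intro z
      rw [hF, ofReal_exp_rpow _ _ (by norm_num)]
      congr 1
      ring
    simp_rw [heq]
    rw [lintegral_gauss_bound (1 / (2 * s)) (1 / 4)
      (by rw [div_lt_div_iff₀ (by norm_num) (by linarith)]; linarith) w ξ']
    apply ENNReal.ofReal_le_ofReal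
    have h1 : (1:ℝ) / (2 * s) - 1 / 4 = (2 - s) / (4 * s) := by field_simp; ring
    have h2 : π / ((1:ℝ) / (2 * s) - 1 / 4) = 4 * π * s / (2 - s) := by
      rw [h1]; field_simp
    have h3 : (1:ℝ) / (2 * s) * (1 / 4) / (1 / (2 * s) - 1 / 4) * ‖w - ξ'‖ ^ 2 =
        ‖w - ξ'‖ ^ 2 / (2 * (2 - s)) := by rw [h1]; field_simp
    rw [h2, h3]
  have hGint : ∫⁻ z, G z ^ (2:ℝ) ≤ ENNReal.ofReal (m ^ 2) := by
    refine le_trans (le_of_eq ?_) hψle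
    congr 1 with z
    rw [hG, ENNReal.ofReal_rpow_of_nonneg (mul_nonneg (hψ0 z) (exp_pos _).le) (by norm_num)]
    congr 1
    rw [show ((2:ℝ)) = ((2:ℕ):ℝ) by norm_num, Real.rpow_natCast, mul_pow,
      ← Real.exp_nat_mul]
    congr 2
    push_cast
    ring
  calc ∫⁻ z, ENNReal.ofReal (rexp (-‖w - z‖ ^ 2 / (4 * s)) * ψ z)
      = ∫⁻ z, F z * G z := by simp_rw [hdecomp]
    _ ≤ (∫⁻ z, F z ^ (2:ℝ)) ^ (1/2 : ℝ) * (∫⁻ z, G z ^ (2:ℝ)) ^ (1/2 : ℝ) :=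
        ENNReal.lintegral_mul_le_Lp_mul_Lq volume ⟨by norm_num, by norm_num, by norm_num⟩ hFm hGm
    _ ≤ (ENNReal.ofReal ((4 * π * s / (2 - s)) ^ ((k : ℝ) / 2) *
          rexp (‖w - ξ'‖ ^ 2 / (2 * (2 - s))))) ^ (1/2 : ℝ) *
        (ENNReal.ofReal (m ^ 2)) ^ (1/2 : ℝ) := by
        gcongr
    _ = _ := by
        have e1 : (((4 * π * s / (2 - s)) ^ ((k : ℝ) / 2)) ^ ((1:ℝ)/2) : ℝ) =
            (4 * π * s / (2 - s)) ^ ((k : ℝ) / 4) := by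
          rw [← Real.rpow_mul (by positivity)]
          congr 1
          ring
        have e2 : (rexp (‖w - ξ'‖ ^ 2 / (2 * (2 - s)))) ^ ((1:ℝ)/2) =
            rexp (‖w - ξ'‖ ^ 2 / (4 * (2 - s))) := by
          rw [← Real.exp_mul, div_mul_div_comm, mul_one]
          congr 2
          ring
        have e3 : ((m ^ 2 : ℝ)) ^ ((1:ℝ)/2) = m := by
          rw [← Real.rpow_natCast m 2, ← Real.rpow_mul hm]
          norm_num
        rw [ENNReal.ofReal_rpow_of_nonneg (by positivity) (by norm_num),
          ENNReal.ofReal_rpow_of_nonneg (by positivity) (by norm_num),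
          ← ENNReal.ofReal_mul (by positivity)]
        congr 1
        rw [Real.mul_rpow (by positivity) (by positivity), e1, e2, e3]

/-- Velázquez-type weighted smoothing inequality in the Euclidean case: for every `k ≥ 1`
there is `C = C(k) > 0` so that for all `τ > 0`, `r, r' ≥ 0` and nonnegative measurable `ψ`
with `N_{r'}(ψ) < ∞`, the function `S(τ)ψ(y) = ∫ K_τ(y,z)ψ(z) dz` is finite everywhere and
`N_r(S(τ)ψ) ≤ C e^τ (4π(1−e^{−τ}))^{−k/2} exp(e^{−τ}((r − r'e^{τ/2})₊)²/(4(1−e^{−τ}))) N_{r'}(ψ)`. -/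
theorem velazquez_smoothing (k : ℕ) (hk : 1 ≤ k) :
    ∃ C : ℝ, 0 < C ∧
      ∀ (τ r r' : ℝ), 0 < τ → 0 ≤ r → 0 ≤ r' →
        ∀ ψ : EuclideanSpace ℝ (Fin k) → ℝ, Measurable ψ → (∀ y, 0 ≤ ψ y) →
          gaussN k r' ψ < ⊤ →
          (∀ y, Integrable fun z => mehlerK k τ y z * ψ z) ∧
          gaussN k r (fun y => ∫ z, mehlerK k τ y z * ψ z) ≤
            ENNReal.ofReal
              (C * Real.exp τ * (4 * π * (1 - Real.exp (-τ))) ^ (-(k : ℝ) / 2) *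
                Real.exp (Real.exp (-τ) * max (r - r' * Real.exp (τ / 2)) 0 ^ 2 /
                  (4 * (1 - Real.exp (-τ))))) * gaussN k r' ψ := by
  refine ⟨(4 * π) ^ ((k : ℝ) / 2), Real.rpow_pos_of_pos (by positivity) _, ?_⟩
  intro τ r r' hτ hr hr' ψ hψm hψ0 hfin
  have hu1 : rexp (-τ) < 1 := by
    have := Real.exp_lt_exp.mpr (show -τ < 0 by linarith)
    simpa using this
  have hu0 : 0 < rexp (-τ) := exp_pos _
  set s := 1 - rexp (-τ) with hsdef
  have hs0 : 0 < s := by simp only [hsdef]; linarith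
  have hs1 : s < 1 := by simp only [hsdef]; linarith
  have h2s : 0 < 2 - s := by linarith
  have h4πs : 0 < 4 * π * s := by
    have : (0:ℝ) < 4 * π := by positivity
    exact mul_pos this hs0
  set A := rexp τ * (4 * π * s) ^ (-(k : ℝ) / 2) with hAdef
  have hA0 : 0 < A := mul_pos (exp_pos τ) (Real.rpow_pos_of_pos h4πs _)
  set P := (4 * π * s / (2 - s)) ^ ((k : ℝ) / 4) with hPdef
  have hP0 : 0 < P := Real.rpow_pos_of_pos (by positivity) _
  set n := (gaussN k r' ψ).toReal with hndef
  have hn0 : 0 ≤ n := ENNReal.toReal_nonneg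
  have hN : gaussN k r' ψ = ENNReal.ofReal n := (ENNReal.ofReal_toReal hfin.ne).symm
  -- ψ-side bound
  have hψle : ∀ ξ' : EuclideanSpace ℝ (Fin k), ‖ξ'‖ ≤ r' →
      (∫⁻ z, ENNReal.ofReal (ψ z ^ 2 * rexp (-‖z - ξ'‖ ^ 2 / 4))) ≤
        ENNReal.ofReal (n ^ 2) := by
    intro ξ' hξ'
    have h1 : (∫⁻ z, ENNReal.ofReal (ψ z ^ 2 * rexp (-‖z - ξ'‖ ^ 2 / 4))) ^ ((1:ℝ)/2) ≤
        ENNReal.ofReal n := by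
      rw [← hN, gaussN]
      exact le_biSup
        (fun ξ => (∫⁻ y, ENNReal.ofReal ((ψ y) ^ 2 * rexp (-‖y - ξ‖ ^ 2 / 4))) ^ (1/2 : ℝ)) hξ'
    calc (∫⁻ z, ENNReal.ofReal (ψ z ^ 2 * rexp (-‖z - ξ'‖ ^ 2 / 4)))
        = ((∫⁻ z, ENNReal.ofReal (ψ z ^ 2 * rexp (-‖z - ξ'‖ ^ 2 / 4))) ^ ((1:ℝ)/2)) ^ (2:ℝ) := by
          rw [← ENNReal.rpow_mul]
          norm_num
      _ ≤ (ENNReal.ofReal n) ^ (2:ℝ) := ENNReal.rpow_le_rpow h1 (by norm_num)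
      _ = ENNReal.ofReal (n ^ 2) := by
          rw [ENNReal.ofReal_rpow_of_nonneg hn0 (by norm_num)]
          norm_num
  -- kernel nonnegativity
  have hK0 : ∀ y z, 0 ≤ mehlerK k τ y z := by
    intro y z
    simp only [mehlerK, ← hsdef]
    exact mul_nonneg (mul_nonneg (exp_pos _).le (Real.rpow_nonneg h4πs.le _)) (exp_pos _).le
  -- main pointwise lintegral bound
  have hw : ∀ (y ξ' : EuclideanSpace ℝ (Fin k)),
      ‖rexp (-τ / 2) • y - ξ'‖ ^ 2 = rexp (-τ) * ‖y - rexp (τ / 2) • ξ'‖ ^ 2 := by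
    intro y ξ'
    have h1 : rexp (-τ / 2) • y - ξ' = rexp (-τ / 2) • (y - rexp (τ / 2) • ξ') := by
      rw [smul_sub, smul_smul, ← Real.exp_add, show -τ/2 + τ/2 = 0 by ring, Real.exp_zero,
        one_smul]
    rw [h1, norm_smul, Real.norm_eq_abs, abs_of_pos (exp_pos _), mul_pow, sq (rexp (-τ/2)),
      ← Real.exp_add]
    norm_num
  have hKψ : ∀ (y ξ' : EuclideanSpace ℝ (Fin k)), ‖ξ'‖ ≤ r' →
      (∫⁻ z, ENNReal.ofReal (mehlerK k τ y z * ψ z)) ≤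
        ENNReal.ofReal (A * (P *
          rexp (rexp (-τ) * ‖y - rexp (τ / 2) • ξ'‖ ^ 2 / (4 * (2 - s))) * n)) := by
    intro y ξ' hξ'
    have hcs := cs_bound s hs0 hs1 ψ hψm hψ0 n hn0 ξ' (rexp (-τ / 2) • y) (hψle ξ' hξ')
    have hpt : ∀ z, ENNReal.ofReal (mehlerK k τ y z * ψ z) =
        ENNReal.ofReal A *
          ENNReal.ofReal (rexp (-‖rexp (-τ / 2) • y - z‖ ^ 2 / (4 * s)) * ψ z) := by
      intro z
      rw [← ENNReal.ofReal_mul hA0.le]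
      congr 1
      simp only [mehlerK, ← hsdef, hAdef]
      ring
    calc ∫⁻ z, ENNReal.ofReal (mehlerK k τ y z * ψ z)
        = ENNReal.ofReal A *
            ∫⁻ z, ENNReal.ofReal (rexp (-‖rexp (-τ / 2) • y - z‖ ^ 2 / (4 * s)) * ψ z) := by
          simp_rw [hpt]
          rw [lintegral_const_mul' _ _ ENNReal.ofReal_ne_top]
      _ ≤ ENNReal.ofReal A * ENNReal.ofReal (P *
            rexp (‖rexp (-τ / 2) • y - ξ'‖ ^ 2 / (4 * (2 - s))) * n) :=
          mul_le_mul_of_nonneg_left hcs (by positivity)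
      _ = _ := by
          rw [← ENNReal.ofReal_mul hA0.le, hw y ξ', mul_assoc P]
  -- integrability
  have hmeasK : ∀ y, Measurable fun z => mehlerK k τ y z * ψ z := by
    intro y
    unfold mehlerK
    fun_prop
  have hint : ∀ y, Integrable (fun z => mehlerK k τ y z * ψ z) := by
    intro y
    refine ⟨(hmeasK y).aestronglyMeasurable, ?_⟩
    rw [hasFiniteIntegral_iff_ofReal
      (Filter.Eventually.of_forall fun z => mul_nonneg (hK0 y z) (hψ0 z))]
    exact lt_of_le_of_lt (hKψ y 0 (by simpa using hr')) ENNReal.ofReal_lt_top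
  refine ⟨hint, ?_⟩
  -- pointwise bound on the integral
  have hS0 : ∀ y, 0 ≤ ∫ z, mehlerK k τ y z * ψ z :=
    fun y => integral_nonneg fun z => mul_nonneg (hK0 y z) (hψ0 z)
  have hSle : ∀ (y ξ' : EuclideanSpace ℝ (Fin k)), ‖ξ'‖ ≤ r' →
      (∫ z, mehlerK k τ y z * ψ z) ≤
        A * (P * rexp (rexp (-τ) * ‖y - rexp (τ / 2) • ξ'‖ ^ 2 / (4 * (2 - s))) * n) := by
    intro y ξ' hξ'
    rw [integral_eq_lintegral_of_nonneg_ae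
      (Filter.Eventually.of_forall fun z => mul_nonneg (hK0 y z) (hψ0 z))
      (hmeasK y).aestronglyMeasurable]
    refine ENNReal.toReal_le_of_le_ofReal (by positivity) (hKψ y ξ' hξ')
  -- final bound
  rw [gaussN]
  refine iSup₂_le fun ξ hξ => ?_
  replace hξ : ‖ξ‖ ≤ r := hξ
  set lam := min (rexp (-τ/2)) (r' / ‖ξ‖) with hlamdef
  have hlam0 : 0 ≤ lam := le_min (exp_pos _).le (div_nonneg hr' (norm_nonneg ξ))
  have hlamle : lam ≤ rexp (-τ/2) := min_le_left _ _
  set ξ' : EuclideanSpace ℝ (Fin k) := lam • ξ with hξ'def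
  have hξ'r : ‖ξ'‖ ≤ r' := by
    rw [hξ'def, norm_smul, Real.norm_eq_abs, abs_of_nonneg hlam0]
    rcases eq_or_ne ‖ξ‖ 0 with h0 | h0
    · rw [h0, mul_zero]; exact hr'
    · have hpos : 0 < ‖ξ‖ := lt_of_le_of_ne (norm_nonneg _) (Ne.symm h0)
      calc lam * ‖ξ‖ ≤ (r' / ‖ξ‖) * ‖ξ‖ :=
            mul_le_mul_of_nonneg_right (min_le_right _ _) (norm_nonneg _)
        _ = r' := by field_simp
  set v : EuclideanSpace ℝ (Fin k) := rexp (τ/2) • ξ' with hvdef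
  have hc1 : rexp (τ/2) * lam ≤ 1 := by
    calc rexp (τ/2) * lam ≤ rexp (τ/2) * rexp (-τ/2) :=
          mul_le_mul_of_nonneg_left hlamle (exp_pos _).le
      _ = 1 := by rw [← Real.exp_add, show τ/2 + -τ/2 = 0 by ring, Real.exp_zero]
  have hexp1 : rexp (τ/2) * rexp (-τ/2) = 1 := by
    rw [← Real.exp_add, show τ/2 + -τ/2 = 0 by ring, Real.exp_zero]
  have hdist : ‖ξ - v‖ ≤ max (r - r' * rexp (τ/2)) 0 := by
    have hveq : ξ - v = (1 - rexp (τ/2) * lam) • ξ := by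
      rw [hvdef, hξ'def, smul_smul, sub_smul, one_smul]
    rw [hveq, norm_smul, Real.norm_eq_abs,
      abs_of_nonneg (by linarith : (0:ℝ) ≤ 1 - rexp (τ/2) * lam)]
    rcases le_or_gt (rexp (-τ/2)) (r' / ‖ξ‖) with hcase | hcase
    · have hle : lam = rexp (-τ/2) := min_eq_left hcase
      rw [hle, hexp1, sub_self, zero_mul]
      exact le_max_right _ _
    · have hle : lam = r' / ‖ξ‖ := min_eq_right hcase.le
      rcases eq_or_ne ‖ξ‖ 0 with h0 | h0
      · rw [h0, mul_zero]; exact le_max_right _ _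
      · have hpos : 0 < ‖ξ‖ := lt_of_le_of_ne (norm_nonneg _) (Ne.symm h0)
        have heq : (1 - rexp (τ/2) * lam) * ‖ξ‖ = ‖ξ‖ - r' * rexp (τ/2) := by
          rw [hle]
          field_simp
        rw [heq]
        exact le_trans (by linarith) (le_max_left _ _)
  -- quadratic constants for the y-integral
  have hβ2 : (0:ℝ) < rexp (-τ) / (2 * (2 - s)) := by positivity
  have hβlt : rexp (-τ) / (2 * (2 - s)) < 1/4 := by
    rw [div_lt_div_iff₀ (by linarith) (by norm_num)]
    simp only [hsdef]
    linarith
  have hγ2 : (1:ℝ)/4 - rexp (-τ) / (2 * (2 - s)) = s / (4 * (2 - s)) := by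
    have he : rexp (-τ) = 1 - s := by simp only [hsdef]; ring
    rw [he, div_sub_div _ _ (by norm_num) (mul_pos two_pos h2s).ne',
      div_eq_div_iff (mul_pos (by norm_num : (0:ℝ) < 4) (mul_pos two_pos h2s)).ne'
        (mul_pos (by norm_num : (0:ℝ) < 4) h2s).ne']
    ring
  -- pointwise bound for the y-integrand
  have hpt2 : ∀ y : EuclideanSpace ℝ (Fin k),
      ENNReal.ofReal ((∫ z, mehlerK k τ y z * ψ z) ^ 2 * rexp (-‖y - ξ‖ ^ 2 / 4)) ≤
        ENNReal.ofReal ((A * P * n) ^ 2) *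
          ENNReal.ofReal (rexp (-(1/4) * ‖y - ξ‖ ^ 2 +
            (rexp (-τ) / (2 * (2 - s))) * ‖y - v‖ ^ 2)) := by
    intro y
    rw [← ENNReal.ofReal_mul (by positivity)]
    apply ENNReal.ofReal_le_ofReal
    have hb := hSle y ξ' hξ'r
    rw [← hvdef] at hb
    have h1 : (∫ z, mehlerK k τ y z * ψ z) ^ 2 ≤
        (A * (P * rexp (rexp (-τ) * ‖y - v‖ ^ 2 / (4 * (2 - s))) * n)) ^ 2 :=
      pow_le_pow_left₀ (hS0 y) hb 2
    calc (∫ z, mehlerK k τ y z * ψ z) ^ 2 * rexp (-‖y - ξ‖ ^ 2 / 4)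
        ≤ (A * (P * rexp (rexp (-τ) * ‖y - v‖ ^ 2 / (4 * (2 - s))) * n)) ^ 2 *
            rexp (-‖y - ξ‖ ^ 2 / 4) := mul_le_mul_of_nonneg_right h1 (exp_pos _).le
      _ = (A * P * n) ^ 2 * (rexp (rexp (-τ) * ‖y - v‖ ^ 2 / (4 * (2 - s))) *
            rexp (rexp (-τ) * ‖y - v‖ ^ 2 / (4 * (2 - s))) * rexp (-‖y - ξ‖ ^ 2 / 4)) := by
          ring
      _ = _ := by
          rw [← Real.exp_add, ← Real.exp_add]
          congr 2
          field_simp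
          ring
  have hc2 : π / ((1:ℝ)/4 - rexp (-τ) / (2 * (2 - s))) = 4 * π * (2 - s) / s := by
    rw [hγ2, div_div_eq_mul_div]
    ring
  have hc3 : (1:ℝ)/4 * (rexp (-τ) / (2 * (2 - s))) /
      ((1:ℝ)/4 - rexp (-τ) / (2 * (2 - s))) = rexp (-τ) / (2 * s) := by
    rw [hγ2]
    field_simp
  -- the Gaussian integral in y
  have hyint : (∫⁻ y, ENNReal.ofReal
        ((∫ z, mehlerK k τ y z * ψ z) ^ 2 * rexp (-‖y - ξ‖ ^ 2 / 4))) ≤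
      ENNReal.ofReal ((A * P * n) ^ 2 * ((4 * π * (2 - s) / s) ^ ((k:ℝ)/2) *
        rexp (rexp (-τ) / (2 * s) * ‖ξ - v‖ ^ 2))) := by
    calc (∫⁻ y, ENNReal.ofReal
          ((∫ z, mehlerK k τ y z * ψ z) ^ 2 * rexp (-‖y - ξ‖ ^ 2 / 4)))
        ≤ ∫⁻ y, ENNReal.ofReal ((A * P * n) ^ 2) *
            ENNReal.ofReal (rexp (-(1/4) * ‖y - ξ‖ ^ 2 +
              (rexp (-τ) / (2 * (2 - s))) * ‖y - v‖ ^ 2)) := lintegral_mono hpt2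
      _ = ENNReal.ofReal ((A * P * n) ^ 2) *
            ∫⁻ y, ENNReal.ofReal (rexp (-(1/4) * ‖y - ξ‖ ^ 2 +
              (rexp (-τ) / (2 * (2 - s))) * ‖y - v‖ ^ 2)) :=
          lintegral_const_mul' _ _ ENNReal.ofReal_ne_top
      _ = ENNReal.ofReal ((A * P * n) ^ 2) *
            ENNReal.ofReal ((π / ((1:ℝ)/4 - rexp (-τ) / (2 * (2 - s)))) ^ ((k:ℝ)/2) *
              rexp ((1:ℝ)/4 * (rexp (-τ) / (2 * (2 - s))) /
                ((1:ℝ)/4 - rexp (-τ) / (2 * (2 - s))) * ‖ξ - v‖ ^ 2)) := by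
          congr 1
          rw [← lintegral_gauss_bound (k := k) (1/4) (rexp (-τ) / (2 * (2 - s))) hβlt ξ v]
      _ = _ := by
          rw [hc2, hc3, ← ENNReal.ofReal_mul (by positivity)]
  -- take square roots
  have hsqrt : ((∫⁻ y, ENNReal.ofReal
        ((∫ z, mehlerK k τ y z * ψ z) ^ 2 * rexp (-‖y - ξ‖ ^ 2 / 4)))) ^ (1/2 : ℝ) ≤
      ENNReal.ofReal (A * P * n * ((4 * π * (2 - s) / s) ^ ((k:ℝ)/4) *
        rexp (rexp (-τ) / (4 * s) * ‖ξ - v‖ ^ 2))) := by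
    refine le_trans (ENNReal.rpow_le_rpow hyint (by norm_num)) (le_of_eq ?_)
    rw [ENNReal.ofReal_rpow_of_nonneg (by positivity) (by norm_num)]
    congr 1
    rw [Real.mul_rpow (by positivity) (by positivity),
      Real.mul_rpow (by positivity) (by positivity),
      ← Real.rpow_natCast (A * P * n) 2, ← Real.rpow_mul (by positivity),
      ← Real.rpow_mul (by positivity), ← Real.exp_mul]
    push_cast
    rw [show (2:ℝ) * (1/2) = 1 by norm_num, Real.rpow_one]
    have harg : rexp (-τ) / (2 * s) * ‖ξ - v‖ ^ 2 * (1/2) =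
        rexp (-τ) / (4 * s) * ‖ξ - v‖ ^ 2 := by
      have hs' : s ≠ 0 := ne_of_gt hs0
      field_simp
      ring
    rw [harg]
    congr 1
    ring
  refine le_trans hsqrt ?_
  rw [hN, ← ENNReal.ofReal_mul (by positivity)]
  apply ENNReal.ofReal_le_ofReal
  have hPP : P * (4 * π * (2 - s) / s) ^ ((k:ℝ)/4) = (4 * π) ^ ((k:ℝ)/2) := by
    rw [hPdef, ← Real.mul_rpow (by positivity) (by positivity),
      show 4 * π * s / (2 - s) * (4 * π * (2 - s) / s) = (4 * π) ^ (2:ℕ) by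
        field_simp,
      ← Real.rpow_natCast (4 * π) 2, ← Real.rpow_mul (by positivity)]
    congr 1
    push_cast
    ring
  have hexp_le : rexp (rexp (-τ) / (4 * s) * ‖ξ - v‖ ^ 2) ≤
      rexp (rexp (-τ) * max (r - r' * rexp (τ/2)) 0 ^ 2 / (4 * s)) := by
    apply Real.exp_le_exp.mpr
    rw [show rexp (-τ) * max (r - r' * rexp (τ/2)) 0 ^ 2 / (4 * s) =
      rexp (-τ) / (4 * s) * max (r - r' * rexp (τ/2)) 0 ^ 2 by ring]
    refine mul_le_mul_of_nonneg_left ?_ (by positivity)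
    exact pow_le_pow_left₀ (norm_nonneg _) hdist 2
  calc A * P * n * ((4 * π * (2 - s) / s) ^ ((k:ℝ)/4) *
        rexp (rexp (-τ) / (4 * s) * ‖ξ - v‖ ^ 2))
      = A * (P * (4 * π * (2 - s) / s) ^ ((k:ℝ)/4)) *
          rexp (rexp (-τ) / (4 * s) * ‖ξ - v‖ ^ 2) * n := by ring
    _ ≤ A * (P * (4 * π * (2 - s) / s) ^ ((k:ℝ)/4)) *
          rexp (rexp (-τ) * max (r - r' * rexp (τ/2)) 0 ^ 2 / (4 * s)) * n := by
        have h0 : 0 ≤ A * (P * (4 * π * (2 - s) / s) ^ ((k:ℝ)/4)) := by positivity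
        exact mul_le_mul_of_nonneg_right (mul_le_mul_of_nonneg_left hexp_le h0) hn0
    _ = (4 * π) ^ ((k:ℝ)/2) * rexp τ * (4 * π * s) ^ (-(k:ℝ)/2) *
          rexp (rexp (-τ) * max (r - r' * rexp (τ/2)) 0 ^ 2 / (4 * s)) * n := by
        rw [hPP, hAdef]
        ring
    _ ≤ _ := le_of_eq rfl
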